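/- arXiv:2208.13643 — 2 statements merged into one kernel-verified Lean document; each statement's English description precedes it below -/
import Mathlib

section
/- Let f : ℝ^{n×p} → ℝ be differentiable, let X ∈ ℝ^{n×p} satisfy ‖XᵀX − I_p‖_F ≤ 1/6, and suppose ‖∇f(X)‖_F ≤ M for some constant M > 0. Then |⟨G(X), X(XᵀX − I_p)⟩| ≤ (7/4)·M·‖XᵀX − I_p‖_F². -/
open Matrix BigOperators Finset Kronecker

/- Equip matrix spaces with the Frobenius norm (finite-dimensional, so the resulting calculus
notions such as `fderiv`/`Differentiable` are norm-independent). -/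
attribute [local instance] Matrix.frobeniusNormedAddCommGroup Matrix.frobeniusNormedSpace

/-- The Frobenius norm of a real matrix. -/
noncomputable def frob {m k : Type*} [Fintype m] [Fintype k] (A : Matrix m k ℝ) : ℝ :=
  Real.sqrt (∑ i, ∑ j, (A i j) ^ 2)

/-- The trace inner product ⟨A, B⟩ = tr(AᵀB) of real matrices. -/
noncomputable def minner {m k : Type*} [Fintype m] [Fintype k] (A B : Matrix m k ℝ) : ℝ :=
  (Aᵀ * B).trace

/-- The symmetric part sym(B) = (B + Bᵀ)/2 of a square matrix. -/
noncomputable def symPart {k : Type*} (B : Matrix k k ℝ) : Matrix k k ℝ :=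
  (1 / 2 : ℝ) • (B + Bᵀ)

/-- The generalized Riemannian gradient G(X) = ∇f(X)((3/2)I - (1/2)XᵀX) - X·sym(Xᵀ∇f(X)),
expressed in terms of the Euclidean gradient matrix `Gf = ∇f(X)`. -/
noncomputable def Gdir {n p : ℕ} (Gf X : Matrix (Fin n) (Fin p) ℝ) :
    Matrix (Fin n) (Fin p) ℝ :=
  Gf * ((3 / 2 : ℝ) • (1 : Matrix (Fin p) (Fin p) ℝ) - (1 / 2 : ℝ) • (Xᵀ * X))
    - X * symPart (Xᵀ * Gf)

/-- The feasibility direction E(X) = X(XᵀX - I). -/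
noncomputable def Edir {n p : ℕ} (X : Matrix (Fin n) (Fin p) ℝ) :
    Matrix (Fin n) (Fin p) ℝ :=
  X * (Xᵀ * X - 1)

/-- The spectral norm (largest singular value) of a real matrix, as the operator norm of the
associated Euclidean linear map. -/
noncomputable def specNorm {m k : Type*} [Fintype m] [Fintype k] [DecidableEq k]
    (A : Matrix m k ℝ) : ℝ :=
  ‖LinearMap.toContinuousLinearMap (Matrix.toEuclideanLin A)‖

/-- The smallest singular value of a real matrix: the square root of the smallest eigenvalue
of AᵀA (= AᴴA over ℝ). -/
noncomputable def sigmaMin {m k : Type*} [Fintype m] [Fintype k] [DecidableEq m] [DecidableEq k]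
    (A : Matrix m k ℝ) : ℝ :=
  Real.sqrt (⨅ i, (Matrix.isHermitian_conjTranspose_mul_self A).eigenvalues i)

lemma minner_eq_sum {m k : Type*} [Fintype m] [Fintype k] (A B : Matrix m k ℝ) :
    minner A B = ∑ j, ∑ i, A i j * B i j := by
  simp [minner, Matrix.trace, Matrix.diag, Matrix.mul_apply, Matrix.transpose_apply]

lemma frob_nonneg {m k : Type*} [Fintype m] [Fintype k] (A : Matrix m k ℝ) : 0 ≤ frob A :=
  Real.sqrt_nonneg _

lemma frob_eq_norm {m k : Type*} [Fintype m] [Fintype k] (A : Matrix m k ℝ) :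
    frob A = ‖A‖ := by
  rw [Matrix.frobenius_norm_def, frob, Real.sqrt_eq_rpow]
  congr 1
  simp [Real.rpow_two, Real.norm_eq_abs, sq_abs, sq]

lemma frob_sq {m k : Type*} [Fintype m] [Fintype k] (A : Matrix m k ℝ) :
    frob A ^ 2 = ∑ i, ∑ j, (A i j) ^ 2 :=
  Real.sq_sqrt (by positivity)

lemma minner_self {m k : Type*} [Fintype m] [Fintype k] (A : Matrix m k ℝ) :
    minner A A = frob A ^ 2 := by
  rw [minner_eq_sum, frob_sq, Finset.sum_comm]
  simp [sq]

lemma abs_minner_le {m k : Type*} [Fintype m] [Fintype k] (A B : Matrix m k ℝ) :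
    |minner A B| ≤ frob A * frob B := by
  have h : (minner A B) ^ 2 ≤ frob A ^ 2 * frob B ^ 2 := by
    rw [minner_eq_sum, frob_sq, frob_sq, Finset.sum_comm (f := fun i j => A i j ^2),
      Finset.sum_comm (f := fun i j => B i j ^2)]
    calc (∑ j, ∑ i, A i j * B i j) ^ 2
        = (∑ x : k × m, A x.2 x.1 * B x.2 x.1) ^ 2 := by
          rw [Fintype.sum_prod_type]
      _ ≤ (∑ x : k × m, A x.2 x.1 ^ 2) * (∑ x : k × m, B x.2 x.1 ^ 2) := by
          simpa [sq] using Finset.sum_mul_sq_le_sq_mul_sq Finset.univ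
            (fun x : k × m => A x.2 x.1) (fun x : k × m => B x.2 x.1)
      _ = (∑ j, ∑ i, A i j ^ 2) * (∑ j, ∑ i, B i j ^ 2) := by
          rw [Fintype.sum_prod_type (f := fun x : k × m => A x.2 x.1 ^ 2),
            Fintype.sum_prod_type (f := fun x : k × m => B x.2 x.1 ^ 2)]
  nlinarith [abs_nonneg (minner A B), sq_abs (minner A B),
    mul_nonneg (frob_nonneg A) (frob_nonneg B)]

lemma frob_mul_le {m k l : Type*} [Fintype m] [Fintype k] [Fintype l]
    (A : Matrix m k ℝ) (B : Matrix k l ℝ) : frob (A * B) ≤ frob A * frob B := by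
  rw [frob_eq_norm, frob_eq_norm, frob_eq_norm]
  exact Matrix.frobenius_norm_mul A B

lemma key {n p : ℕ} (Gf X : Matrix (Fin n) (Fin p) ℝ) :
    minner (Gdir Gf X) (X * (Xᵀ * X - 1)) =
      -(3 / 2) * minner Gf (X * ((Xᵀ * X - 1) * (Xᵀ * X - 1))) := by
  set E : Matrix (Fin p) (Fin p) ℝ := Xᵀ * X - 1 with hE
  have hEt : Eᵀ = E := by
    simp [hE, Matrix.transpose_sub, Matrix.transpose_mul]
  have hXX : Xᵀ * X = E + 1 := by simp [hE]
  set C : Matrix (Fin p) (Fin p) ℝ := Xᵀ * Gf with hC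
  have hCt : Gfᵀ * X = Cᵀ := by simp [hC, Matrix.transpose_mul]
  have hm : Gfᵀ * (X * E) = Cᵀ * E := by rw [← Matrix.mul_assoc, hCt]
  have hm2 : Gfᵀ * (X * (E * E)) = Cᵀ * (E * E) := by rw [← Matrix.mul_assoc, hCt]
  have hx : Xᵀ * (X * E) = E * E + E := by
    rw [← Matrix.mul_assoc, hXX, Matrix.add_mul, Matrix.one_mul]
  have tC2 : (C * (E * E)).trace = (Cᵀ * (E * E)).trace := by
    rw [← Matrix.trace_transpose (C * (E * E))]
    simp only [Matrix.transpose_mul, hEt]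
    rw [Matrix.trace_mul_comm]
  have tC1 : (C * E).trace = (Cᵀ * E).trace := by
    rw [← Matrix.trace_transpose (C * E), Matrix.transpose_mul, hEt, Matrix.trace_mul_comm]
  have h1 : (Gfᵀ * (X * E)).trace = (Cᵀ * E).trace := by rw [hm]
  have h2 : (E * (Gfᵀ * (X * E))).trace = (Cᵀ * (E * E)).trace := by
    rw [Matrix.trace_mul_comm, hm, Matrix.mul_assoc]
  have h3 : (Cᵀ * (Xᵀ * (X * E))).trace = (Cᵀ * (E * E)).trace + (Cᵀ * E).trace := by
    rw [hx, Matrix.mul_add, Matrix.trace_add]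
  have h4 : (C * (Xᵀ * (X * E))).trace = (Cᵀ * (E * E)).trace + (Cᵀ * E).trace := by
    rw [hx, Matrix.mul_add, Matrix.trace_add, tC2, tC1]
  have h5 : (Gfᵀ * (X * (E * E))).trace = (Cᵀ * (E * E)).trace := by rw [hm2]
  -- expand
  simp only [minner, Gdir, symPart, hXX, Matrix.transpose_sub, Matrix.transpose_mul,
    Matrix.transpose_smul, Matrix.transpose_add, Matrix.transpose_transpose,
    Matrix.transpose_one, hEt, hCt]
  simp only [Matrix.sub_mul, Matrix.add_mul, Matrix.mul_sub, Matrix.mul_add,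
    Matrix.smul_mul, Matrix.mul_smul, Matrix.mul_one, Matrix.one_mul,
    Matrix.trace_sub, Matrix.trace_add, Matrix.trace_smul, Matrix.mul_assoc, smul_eq_mul]
  rw [h1, h2, h3, h4, h5]
  ring

/-- If `‖XᵀX - I‖_F ≤ 1/6` and `‖∇f(X)‖_F ≤ M` with `M > 0`, then
`|⟨G(X), X(XᵀX - I)⟩| ≤ (7/4)·M·‖XᵀX - I‖_F²`. -/
theorem stmt4 {n p : ℕ} (f : Matrix (Fin n) (Fin p) ℝ → ℝ)
    (hf : Differentiable ℝ f)
    (gradf : Matrix (Fin n) (Fin p) ℝ → Matrix (Fin n) (Fin p) ℝ)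
    (hgrad : ∀ X V, fderiv ℝ f X V = minner (gradf X) V)
    (X : Matrix (Fin n) (Fin p) ℝ) (hX : frob (Xᵀ * X - 1) ≤ 1 / 6)
    (M : ℝ) (hM : 0 < M) (hbound : frob (gradf X) ≤ M) :
    |minner (Gdir (gradf X) X) (X * (Xᵀ * X - 1))|
      ≤ 7 / 4 * M * frob (Xᵀ * X - 1) ^ 2 := by
  set E : Matrix (Fin p) (Fin p) ℝ := Xᵀ * X - 1 with hE
  have hEt : Eᵀ = E := by simp [hE, Matrix.transpose_sub, Matrix.transpose_mul]
  have hkey := key (gradf X) X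
  rw [← hE] at hkey
  have hfE : (0:ℝ) ≤ frob E := frob_nonneg E
  have hfG : (0:ℝ) ≤ frob (gradf X) := frob_nonneg _
  -- bound frob (X * E)
  have hXE2 : frob (X * E) ^ 2 ≤ 7 / 6 * frob E ^ 2 := by
    have hexp : minner (X * E) (X * E) = (E * (E * E)).trace + (E * E).trace := by
      have : (X * E)ᵀ * (X * E) = E * (E * E) + E * E := by
        rw [Matrix.transpose_mul, hEt, Matrix.mul_assoc, ← Matrix.mul_assoc Xᵀ X E, hE]
        simp only [Matrix.sub_mul, Matrix.one_mul, Matrix.mul_sub, Matrix.mul_one]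
        noncomm_ring
      rw [minner, this, Matrix.trace_add]
    have hE2 : (E * E).trace = frob E ^ 2 := by
      have := minner_self E
      rwa [minner, hEt] at this
    have hE3 : |(E * (E * E)).trace| ≤ frob E ^ 3 := by
      have h1 : |minner E (E * E)| ≤ frob E * frob (E * E) := abs_minner_le E (E * E)
      have h2 : frob (E * E) ≤ frob E * frob E := frob_mul_le E E
      have h3 : minner E (E * E) = (E * (E * E)).trace := by rw [minner, hEt]
      calc |(E * (E * E)).trace| = |minner E (E * E)| := by rw [h3]
        _ ≤ frob E * frob (E * E) := h1
        _ ≤ frob E * (frob E * frob E) := by nlinarith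
        _ = frob E ^ 3 := by ring
    have hsq : frob (X * E) ^ 2 = (E * (E * E)).trace + (E * E).trace := by
      rw [← minner_self, hexp]
    have hcube : frob E ^ 3 ≤ 1 / 6 * frob E ^ 2 := by nlinarith
    rw [hsq, hE2]
    have := abs_le.mp hE3
    linarith
  have hXE : frob (X * E) ≤ 7 / 6 * frob E := by nlinarith [frob_nonneg (X * E)]
  -- main chain
  rw [hkey, abs_mul]
  have habs : |(-(3 / 2) : ℝ)| = 3 / 2 := by norm_num
  rw [habs]
  have hb1 : |minner (gradf X) (X * (E * E))| ≤ frob (gradf X) * frob (X * (E * E)) :=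
    abs_minner_le _ _
  have hb2 : frob (X * (E * E)) ≤ frob (X * E) * frob E := by
    rw [← Matrix.mul_assoc]
    exact frob_mul_le (X * E) E
  have hb3 : frob (X * (E * E)) ≤ 7 / 6 * frob E ^ 2 := by nlinarith
  have hfXEE : (0:ℝ) ≤ frob (X * (E * E)) := frob_nonneg _
  nlinarith [abs_nonneg (minner (gradf X) (X * (E * E)))]
end

section
/- Let f_1, …, f_d : ℝ^{n×p} → ℝ be differentiable, let β > 0, and for each i define H_i(X) = G_i(X) + β·X(XᵀX − I_p), where G_i(X) = ∇f_i(X)((3/2)I_p − (1/2)XᵀX) − X·sym(Xᵀ∇f_i(X)). Let X_1, …, X_d ∈ ℝ^{n×p}, set X̄ = (1/d)Σ_{i=1}^d X_i, and suppose each H_i satisfies ‖H_i(X̄) − H_i(X_i)‖_F ≤ L̂·‖X̄ − X_i‖_F for a constant L̂ > 0. Then ‖(1/d)Σ_{i=1}^d H_i(X̄)‖_F² + (1/d)Σ_{i=1}^d ‖X_i − X̄‖_F² ≤ 2(L̂² + 1)·( ‖(1/d)Σ_{i=1}^d H_i(X_i)‖_F² + (1/d)Σ_{i=1}^d ‖X_i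 − X̄‖_F² ). -/
open Matrix BigOperators Finset Kronecker

/- Equip matrix spaces with the Frobenius norm (finite-dimensional, so the resulting calculus
notions such as `fderiv`/`Differentiable` are norm-independent). -/
attribute [local instance] Matrix.frobeniusNormedAddCommGroup Matrix.frobeniusNormedSpace

set_option maxHeartbeats 1000000 in
/-- Transfer of the tracked-direction bound to the averaged iterate. With
`Hᵢ(X) = Gᵢ(X) + βE(X)`, `X̄ = (1/d)Σᵢ Xᵢ`, and `‖Hᵢ(X̄) - Hᵢ(Xᵢ)‖_F ≤ L̂‖X̄ - Xᵢ‖_F`,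
`‖(1/d)Σᵢ Hᵢ(X̄)‖_F² + (1/d)Σᵢ ‖Xᵢ - X̄‖_F²
  ≤ 2(L̂² + 1)(‖(1/d)Σᵢ Hᵢ(Xᵢ)‖_F² + (1/d)Σᵢ ‖Xᵢ - X̄‖_F²)`. -/
theorem stmt18 {n p d : ℕ} (hd : 0 < d)
    (f : Fin d → Matrix (Fin n) (Fin p) ℝ → ℝ) (hf : ∀ i, Differentiable ℝ (f i))
    (gradf : Fin d → Matrix (Fin n) (Fin p) ℝ → Matrix (Fin n) (Fin p) ℝ)
    (hgrad : ∀ i X V, fderiv ℝ (f i) X V = minner (gradf i X) V)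
    (β : ℝ) (hβ : 0 < β)
    (H : Fin d → Matrix (Fin n) (Fin p) ℝ → Matrix (Fin n) (Fin p) ℝ)
    (hH : ∀ i X, H i X = Gdir (gradf i X) X + β • Edir X)
    (X : Fin d → Matrix (Fin n) (Fin p) ℝ)
    (Xbar : Matrix (Fin n) (Fin p) ℝ) (hXbar : Xbar = (d : ℝ)⁻¹ • ∑ i, X i)
    (Lhat : ℝ) (hLhat : 0 < Lhat)
    (hLip : ∀ i, frob (H i Xbar - H i (X i)) ≤ Lhat * frob (Xbar - X i)) :
    frob ((d : ℝ)⁻¹ • ∑ i, H i Xbar) ^ 2 + (d : ℝ)⁻¹ * ∑ i, frob (X i - Xbar) ^ 2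
      ≤ 2 * (Lhat ^ 2 + 1)
          * (frob ((d : ℝ)⁻¹ • ∑ i, H i (X i)) ^ 2
              + (d : ℝ)⁻¹ * ∑ i, frob (X i - Xbar) ^ 2) := by

  classical
  -- identify `frob` with the Frobenius norm
  have hfrob : ∀ (A : Matrix (Fin n) (Fin p) ℝ), frob A = ‖A‖ := by
    intro A
    rw [Matrix.frobenius_norm_def, frob, Real.sqrt_eq_rpow]
    congr 1
    simp [Real.norm_eq_abs, sq_abs]
  set e : Fin d → Matrix (Fin n) (Fin p) ℝ := fun i => H i Xbar - H i (X i) with he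
  have hsplit : (d : ℝ)⁻¹ • ∑ i, H i Xbar
      = ((d : ℝ)⁻¹ • ∑ i, H i (X i)) + ((d : ℝ)⁻¹ • ∑ i, e i) := by
    rw [← smul_add, ← Finset.sum_add_distrib]
    simp [he]
  set S : ℝ := (d : ℝ)⁻¹ * ∑ i, frob (X i - Xbar) ^ 2 with hS
  have hd' : (0:ℝ) < d := by exact_mod_cast hd
  have hSnn : 0 ≤ S := by
    apply mul_nonneg (by positivity)
    apply Finset.sum_nonneg; intro i _; positivity
  -- bound on the average error
  have havgE : frob ((d : ℝ)⁻¹ • ∑ i, e i) ^ 2 ≤ Lhat ^ 2 * S := by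
    have h1 : frob ((d : ℝ)⁻¹ • ∑ i, e i) ≤ (d : ℝ)⁻¹ * ∑ i, ‖e i‖ := by
      rw [hfrob, norm_smul]
      gcongr
      · simp [abs_of_nonneg (le_of_lt (inv_pos.mpr hd'))]
      · exact norm_sum_le _ _
    have h2 : ((d : ℝ)⁻¹ * ∑ i, ‖e i‖) ^ 2 ≤ (d : ℝ)⁻¹ * ∑ i, ‖e i‖ ^ 2 := by
      rw [mul_pow]
      have := sq_sum_le_card_mul_sum_sq (s := Finset.univ) (f := fun i => ‖e i‖)
      simp only [Finset.card_univ, Fintype.card_fin] at this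
      calc ((d : ℝ)⁻¹) ^ 2 * (∑ i, ‖e i‖) ^ 2
          ≤ ((d : ℝ)⁻¹) ^ 2 * ((d:ℝ) * ∑ i, ‖e i‖ ^ 2) := by
            exact mul_le_mul_of_nonneg_left (by exact_mod_cast this) (sq_nonneg _)
        _ = (d : ℝ)⁻¹ * ∑ i, ‖e i‖ ^ 2 := by
            field_simp
    have h3 : (d : ℝ)⁻¹ * ∑ i, ‖e i‖ ^ 2 ≤ Lhat ^ 2 * S := by
      have hsum : ∑ i, ‖e i‖ ^ 2 ≤ ∑ i, Lhat ^ 2 * frob (X i - Xbar) ^ 2 := by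
        apply Finset.sum_le_sum
        intro i _
        have hl := hLip i
        rw [hfrob, hfrob] at hl
        have hnorm : ‖Xbar - X i‖ = ‖X i - Xbar‖ := by rw [norm_sub_rev]
        calc ‖e i‖ ^ 2 ≤ (Lhat * ‖X i - Xbar‖) ^ 2 := by
              apply sq_le_sq' <;> nlinarith [norm_nonneg (e i), norm_nonneg (X i - Xbar), hLhat.le]
          _ = Lhat ^ 2 * frob (X i - Xbar) ^ 2 := by rw [hfrob, mul_pow]
      rw [hS]
      calc (d : ℝ)⁻¹ * ∑ i, ‖e i‖ ^ 2 ≤ (d : ℝ)⁻¹ * ∑ i, Lhat ^ 2 * frob (X i - Xbar) ^ 2 := by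
            exact mul_le_mul_of_nonneg_left hsum (by positivity)
        _ = Lhat ^ 2 * ((d : ℝ)⁻¹ * ∑ i, frob (X i - Xbar) ^ 2) := by
            rw [← Finset.mul_sum]; ring
    have hnn : 0 ≤ frob ((d : ℝ)⁻¹ • ∑ i, e i) := by rw [hfrob]; exact norm_nonneg _
    calc frob ((d : ℝ)⁻¹ • ∑ i, e i) ^ 2 ≤ ((d : ℝ)⁻¹ * ∑ i, ‖e i‖) ^ 2 := by
          apply sq_le_sq' _ h1
          nlinarith [Finset.sum_nonneg (fun i (_ : i ∈ Finset.univ) => norm_nonneg (e i)), hd'.le]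
      _ ≤ _ := h2.trans h3
  set a := frob ((d : ℝ)⁻¹ • ∑ i, H i Xbar) with ha
  set b := frob ((d : ℝ)⁻¹ • ∑ i, H i (X i)) with hb
  have htri : a ≤ b + frob ((d : ℝ)⁻¹ • ∑ i, e i) := by
    rw [ha, hb, hfrob, hfrob, hfrob, hsplit]
    exact norm_add_le _ _
  have hbnn : 0 ≤ b := by rw [hb, hfrob]; exact norm_nonneg _
  have hann : 0 ≤ a := by rw [ha, hfrob]; exact norm_nonneg _
  have hcnn : 0 ≤ frob ((d : ℝ)⁻¹ • ∑ i, e i) := by rw [hfrob]; exact norm_nonneg _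
  set c := frob ((d : ℝ)⁻¹ • ∑ i, e i) with hc
  have hab : a ^ 2 ≤ 2 * b ^ 2 + 2 * (Lhat ^ 2 * S) := by
    have h4 : a ^ 2 ≤ (b + c) ^ 2 := by
      have := pow_le_pow_left₀ hann htri 2
      simpa using this
    nlinarith [sq_nonneg (b - c), havgE]
  nlinarith [hab, hSnn, sq_nonneg b, mul_nonneg (sq_nonneg Lhat) (sq_nonneg b), mul_nonneg (sq_nonneg Lhat) hSnn]
end
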